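/- Let f : ℝ → ℝ satisfy: (i) f belongs to the Newton class; (ii) the limits of f at +∞ and −∞ are infinite and of opposite signs; (iii) f has at least four real roots. Then there exist two disjoint nondegenerate compact intervals I₁ and I₂ on which f′ does not vanish, M_f is continuous on I₁ and on I₂, and M_f(I₁) ⊇ I₁ ∪ I₂ and M_f(I₂) ⊇ I₁ ∪ I₂. -/

import Mathlib

/-- `f` belongs to the Newton class: `f` is twice continuously differentiable,
roots of `f` are simple, and roots of `f'` are simple. -/
def NewtonClass (f : ℝ → ℝ) : Prop :=
  ContDiff ℝ 2 f ∧ (∀ x, f x = 0 → deriv f x ≠ 0) ∧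
    (∀ x, deriv f x = 0 → deriv (deriv f) x ≠ 0)

/-- The classical Newton approximation function `N_f(x) = x - f(x)/f'(x)`. -/
noncomputable def newtonFun (f : ℝ → ℝ) (x : ℝ) : ℝ :=
  x - f x / deriv f x

/-- The modified Newton approximation function
`M_f(x) = N_f(x) - f(N_f(x))/f'(x)`. -/
noncomputable def modNewtonFun (f : ℝ → ℝ) (x : ℝ) : ℝ :=
  newtonFun f x - f (newtonFun f x) / deriv f x

open Filter Set Topology

section Auxiliary

private lemma nhds_add_atTop {f g : ℝ → ℝ} {l : Filter ℝ} {C : ℝ}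
    (hf : Tendsto f l (𝓝 C)) (hg : Tendsto g l atTop) :
    Tendsto (fun x => f x + g x) l atTop := by
  refine tendsto_atTop_mono' l ?_ (tendsto_atTop_add_const_left l (C - 1) hg)
  filter_upwards [hf.eventually (eventually_ge_nhds (by linarith : C - 1 < C))] with x hx
  exact add_le_add_left hx _

private lemma nhds_add_atBot {f g : ℝ → ℝ} {l : Filter ℝ} {C : ℝ}
    (hf : Tendsto f l (𝓝 C)) (hg : Tendsto g l atBot) :
    Tendsto (fun x => f x + g x) l atBot := by
  refine tendsto_atBot_mono' l ?_ (tendsto_atBot_add_const_left l (C + 1) hg)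
  filter_upwards [hf.eventually (eventually_le_nhds (by linarith : C < C + 1))] with x hx
  exact add_le_add_left hx _

private lemma modNewton_eq {f : ℝ → ℝ} {x : ℝ} (h : deriv f x ≠ 0) :
    modNewtonFun f x = x + -((f x + f (newtonFun f x)) * (deriv f x)⁻¹) := by
  unfold modNewtonFun newtonFun
  field_simp
  ring

variable {f : ℝ → ℝ} {c : ℝ} {l : Filter ℝ}

private lemma chain_setup (hcont : Continuous f)
    (hx : Tendsto (fun x => x) l (𝓝 c))
    (hd : Tendsto (deriv f) l (𝓝[>] 0)) :
    Tendsto f l (𝓝 (f c)) ∧ Tendsto (fun x => (deriv f x)⁻¹) l atTop ∧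
      (∀ᶠ x in l, deriv f x ≠ 0) := by
  refine ⟨(hcont.tendsto c).comp hx, tendsto_inv_nhdsGT_zero.comp hd, ?_⟩
  filter_upwards [hd self_mem_nhdsWithin] with x hx
  exact ne_of_gt hx

private lemma chain_finish_top (hx : Tendsto (fun x => x) l (𝓝 c))
    (hne : ∀ᶠ x in l, deriv f x ≠ 0)
    (hq : Tendsto (fun x => (f x + f (newtonFun f x)) * (deriv f x)⁻¹) l atBot) :
    Tendsto (modNewtonFun f) l atTop := by
  have hq' : Tendsto (fun x => -((f x + f (newtonFun f x)) * (deriv f x)⁻¹)) l atTop :=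
    tendsto_neg_atBot_atTop.comp hq
  have hM := nhds_add_atTop hx hq'
  refine hM.congr' ?_
  filter_upwards [hne] with x h
  exact (modNewton_eq h).symm

private lemma chain_finish_bot (hx : Tendsto (fun x => x) l (𝓝 c))
    (hne : ∀ᶠ x in l, deriv f x ≠ 0)
    (hq : Tendsto (fun x => (f x + f (newtonFun f x)) * (deriv f x)⁻¹) l atTop) :
    Tendsto (modNewtonFun f) l atBot := by
  have hq' : Tendsto (fun x => -((f x + f (newtonFun f x)) * (deriv f x)⁻¹)) l atBot :=
    tendsto_neg_atTop_atBot.comp hq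
  have hM := nhds_add_atBot hx hq'
  refine hM.congr' ?_
  filter_upwards [hne] with x h
  exact (modNewton_eq h).symm

/-- The Newton map tends to `+∞` when `f c < 0` and `f' → 0⁺`. -/
private lemma chain_newton_top (hcont : Continuous f)
    (hx : Tendsto (fun x => x) l (𝓝 c))
    (hd : Tendsto (deriv f) l (𝓝[>] 0)) (hfc : f c < 0) :
    Tendsto (newtonFun f) l atTop := by
  obtain ⟨hfl, hinv, -⟩ := chain_setup hcont hx hd
  have hdiv : Tendsto (fun x => f x * (deriv f x)⁻¹) l atBot :=
    Filter.Tendsto.neg_mul_atTop hfc hfl hinv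
  have h1 : Tendsto (fun x => x + -(f x * (deriv f x)⁻¹)) l atTop :=
    nhds_add_atTop hx (tendsto_neg_atBot_atTop.comp hdiv)
  refine h1.congr fun x => ?_
  simp [newtonFun, div_eq_mul_inv, sub_eq_add_neg]

/-- The Newton map tends to `-∞` when `0 < f c` and `f' → 0⁺`. -/
private lemma chain_newton_bot (hcont : Continuous f)
    (hx : Tendsto (fun x => x) l (𝓝 c))
    (hd : Tendsto (deriv f) l (𝓝[>] 0)) (hfc : 0 < f c) :
    Tendsto (newtonFun f) l atBot := by
  obtain ⟨hfl, hinv, -⟩ := chain_setup hcont hx hd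
  have hdiv : Tendsto (fun x => f x * (deriv f x)⁻¹) l atTop :=
    Filter.Tendsto.pos_mul_atTop hfc hfl hinv
  have h1 : Tendsto (fun x => x + -(f x * (deriv f x)⁻¹)) l atBot :=
    nhds_add_atBot hx (tendsto_neg_atTop_atBot.comp hdiv)
  refine h1.congr fun x => ?_
  simp [newtonFun, div_eq_mul_inv, sub_eq_add_neg]

private lemma chainA (hcont : Continuous f)
    (hx : Tendsto (fun x => x) l (𝓝 c))
    (hd : Tendsto (deriv f) l (𝓝[>] 0)) (hfc : f c < 0)
    (hTop : Tendsto f atTop atTop) :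
    Tendsto (modNewtonFun f) l atBot := by
  obtain ⟨hfl, hinv, hne⟩ := chain_setup hcont hx hd
  have hN := chain_newton_top hcont hx hd hfc
  have hg : Tendsto (fun x => f x + f (newtonFun f x)) l atTop :=
    nhds_add_atTop hfl (hTop.comp hN)
  exact chain_finish_bot hx hne (hg.atTop_mul_atTop₀ hinv)

private lemma chainB (hcont : Continuous f)
    (hx : Tendsto (fun x => x) l (𝓝 c))
    (hd : Tendsto (deriv f) l (𝓝[>] 0)) (hfc : f c < 0)
    (hTop : Tendsto f atTop atBot) :
    Tendsto (modNewtonFun f) l atTop := by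
  obtain ⟨hfl, hinv, hne⟩ := chain_setup hcont hx hd
  have hN := chain_newton_top hcont hx hd hfc
  have hg : Tendsto (fun x => f x + f (newtonFun f x)) l atBot :=
    nhds_add_atBot hfl (hTop.comp hN)
  exact chain_finish_top hx hne (hg.atBot_mul_atTop₀ hinv)

private lemma chainC (hcont : Continuous f)
    (hx : Tendsto (fun x => x) l (𝓝 c))
    (hd : Tendsto (deriv f) l (𝓝[>] 0)) (hfc : 0 < f c)
    (hBot : Tendsto f atBot atBot) :
    Tendsto (modNewtonFun f) l atTop := by
  obtain ⟨hfl, hinv, hne⟩ := chain_setup hcont hx hd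
  have hN := chain_newton_bot hcont hx hd hfc
  have hg : Tendsto (fun x => f x + f (newtonFun f x)) l atBot :=
    nhds_add_atBot hfl (hBot.comp hN)
  exact chain_finish_top hx hne (hg.atBot_mul_atTop₀ hinv)

private lemma chainD (hcont : Continuous f)
    (hx : Tendsto (fun x => x) l (𝓝 c))
    (hd : Tendsto (deriv f) l (𝓝[>] 0)) (hfc : 0 < f c)
    (hBot : Tendsto f atBot atTop) :
    Tendsto (modNewtonFun f) l atBot := by
  obtain ⟨hfl, hinv, hne⟩ := chain_setup hcont hx hd
  have hN := chain_newton_bot hcont hx hd hfc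
  have hg : Tendsto (fun x => f x + f (newtonFun f x)) l atTop :=
    nhds_add_atTop hfl (hBot.comp hN)
  exact chain_finish_bot hx hne (hg.atTop_mul_atTop₀ hinv)

private lemma modNewton_neg (f : ℝ → ℝ) :
    modNewtonFun (fun x => -f x) = modNewtonFun f := by
  have hd : deriv (fun x => -f x) = fun x => -deriv f x := deriv.neg'
  have hN : newtonFun (fun x => -f x) = newtonFun f := by
    funext x
    simp only [newtonFun, hd, neg_div_neg_eq]
  funext x
  simp only [modNewtonFun, hN, hd, neg_div_neg_eq]

private lemma interval_pos {f : ℝ → ℝ} {c₁ r c₂ : ℝ}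
    (hcont : Continuous f) (hdc : Continuous (deriv f))
    (h1 : c₁ < r) (h2 : r < c₂) (hr : f r = 0)
    (hd₁ : deriv f c₁ = 0) (hd₂ : deriv f c₂ = 0)
    (hpos : ∀ x ∈ Ioo c₁ c₂, 0 < deriv f x)
    (hlim : (Tendsto f atTop atTop ∧ Tendsto f atBot atBot) ∨
            (Tendsto f atTop atBot ∧ Tendsto f atBot atTop)) :
    (Tendsto (modNewtonFun f) (𝓝[>] c₁) atTop ∧
      Tendsto (modNewtonFun f) (𝓝[<] c₂) atBot) ∨
    (Tendsto (modNewtonFun f) (𝓝[>] c₁) atBot ∧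
      Tendsto (modNewtonFun f) (𝓝[<] c₂) atTop) := by
  have hmono : StrictMonoOn f (Icc c₁ c₂) :=
    strictMonoOn_of_deriv_pos (convex_Icc _ _) hcont.continuousOn
      (fun x hx => hpos x (by rwa [interior_Icc] at hx))
  have hmem₁ : c₁ ∈ Icc c₁ c₂ := ⟨le_refl _, (h1.trans h2).le⟩
  have hmemr : r ∈ Icc c₁ c₂ := ⟨h1.le, h2.le⟩
  have hmem₂ : c₂ ∈ Icc c₁ c₂ := ⟨(h1.trans h2).le, le_refl _⟩
  have hfc₁ : f c₁ < 0 := hr ▸ hmono hmem₁ hmemr h1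
  have hfc₂ : 0 < f c₂ := hr ▸ hmono hmemr hmem₂ h2
  have hxl : Tendsto (fun x : ℝ => x) (𝓝[>] c₁) (𝓝 c₁) :=
    tendsto_id.mono_right nhdsWithin_le_nhds
  have hxr : Tendsto (fun x : ℝ => x) (𝓝[<] c₂) (𝓝 c₂) :=
    tendsto_id.mono_right nhdsWithin_le_nhds
  have hdl : Tendsto (deriv f) (𝓝[>] c₁) (𝓝[>] 0) := by
    rw [tendsto_nhdsWithin_iff]
    constructor
    · have h := (hdc.tendsto c₁).mono_left (nhdsWithin_le_nhds (s := Ioi c₁))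
      rwa [hd₁] at h
    · filter_upwards [Ioo_mem_nhdsGT_of_mem
        (⟨le_refl c₁, h1.trans h2⟩ : c₁ ∈ Ico c₁ c₂)] with x hx
      exact hpos x hx
  have hdr : Tendsto (deriv f) (𝓝[<] c₂) (𝓝[>] 0) := by
    rw [tendsto_nhdsWithin_iff]
    constructor
    · have h := (hdc.tendsto c₂).mono_left (nhdsWithin_le_nhds (s := Iio c₂))
      rwa [hd₂] at h
    · filter_upwards [Ioo_mem_nhdsLT_of_mem
        (⟨h1.trans h2, le_refl c₂⟩ : c₂ ∈ Ioc c₁ c₂)] with x hx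
      exact hpos x hx
  rcases hlim with ⟨hT, hB⟩ | ⟨hT, hB⟩
  · exact Or.inr ⟨chainA hcont hxl hdl hfc₁ hT, chainC hcont hxr hdr hfc₂ hB⟩
  · exact Or.inl ⟨chainB hcont hxl hdl hfc₁ hT, chainD hcont hxr hdr hfc₂ hB⟩

private lemma interval_blowup {f : ℝ → ℝ} {c₁ r c₂ : ℝ}
    (hcont : Continuous f) (hdc : Continuous (deriv f))
    (h1 : c₁ < r) (h2 : r < c₂) (hr : f r = 0)
    (hd₁ : deriv f c₁ = 0) (hd₂ : deriv f c₂ = 0)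
    (hne : ∀ x ∈ Ioo c₁ c₂, deriv f x ≠ 0)
    (hlim : (Tendsto f atTop atTop ∧ Tendsto f atBot atBot) ∨
            (Tendsto f atTop atBot ∧ Tendsto f atBot atTop)) :
    (Tendsto (modNewtonFun f) (𝓝[>] c₁) atTop ∧
      Tendsto (modNewtonFun f) (𝓝[<] c₂) atBot) ∨
    (Tendsto (modNewtonFun f) (𝓝[>] c₁) atBot ∧
      Tendsto (modNewtonFun f) (𝓝[<] c₂) atTop) := by
  have hsign : (∀ x ∈ Ioo c₁ c₂, 0 < deriv f x) ∨
      (∀ x ∈ Ioo c₁ c₂, deriv f x < 0) := by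
    by_contra h
    push_neg at h
    obtain ⟨⟨a, ha, ha'⟩, ⟨b, hb, hb'⟩⟩ := h
    have ha0 : deriv f a < 0 := lt_of_le_of_ne ha' (hne a ha)
    have hb0 : 0 < deriv f b := lt_of_le_of_ne hb' (Ne.symm (hne b hb))
    have h0 : (0 : ℝ) ∈ uIcc (deriv f a) (deriv f b) :=
      Set.mem_uIcc.mpr (Or.inl ⟨ha0.le, hb0.le⟩)
    obtain ⟨z, hz, hz0⟩ := intermediate_value_uIcc (hdc.continuousOn) h0
    exact hne z ((ordConnected_Ioo.uIcc_subset ha hb) hz) hz0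
  rcases hsign with hpos | hneg
  · exact interval_pos hcont hdc h1 h2 hr hd₁ hd₂ hpos hlim
  · have hdneg : deriv (fun x => -f x) = fun x => -deriv f x := deriv.neg'
    have h := interval_pos (f := fun x => -f x)
      hcont.neg (by rw [hdneg]; exact hdc.neg)
      h1 h2 (by simp [hr]) (by simp [hdneg, hd₁]) (by simp [hdneg, hd₂])
      (by intro x hx; rw [hdneg]; simpa using (hneg x hx))
      (by rcases hlim with ⟨hT, hB⟩ | ⟨hT, hB⟩
          · exact Or.inr ⟨tendsto_neg_atTop_atBot.comp hT, tendsto_neg_atBot_atTop.comp hB⟩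
          · exact Or.inl ⟨tendsto_neg_atBot_atTop.comp hT, tendsto_neg_atTop_atBot.comp hB⟩)
    rwa [modNewton_neg] at h

private lemma crit_left {f : ℝ → ℝ} (hdc : Continuous (deriv f)) {k r : ℝ}
    (hk : deriv f k = 0) (hkr : k < r) (hfr : deriv f r ≠ 0) :
    ∃ c, deriv f c = 0 ∧ k ≤ c ∧ c < r ∧ ∀ x ∈ Ioo c r, deriv f x ≠ 0 := by
  have hclosed : IsClosed {x : ℝ | deriv f x = 0} := isClosed_eq hdc continuous_const
  have hcomp : IsCompact ({x : ℝ | deriv f x = 0} ∩ Icc k r) :=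
    isCompact_Icc.inter_left hclosed
  have hAne : ({x : ℝ | deriv f x = 0} ∩ Icc k r).Nonempty :=
    ⟨k, hk, le_refl k, hkr.le⟩
  have hcA : sSup ({x : ℝ | deriv f x = 0} ∩ Icc k r) ∈
      {x : ℝ | deriv f x = 0} ∩ Icc k r := hcomp.sSup_mem hAne
  set c := sSup ({x : ℝ | deriv f x = 0} ∩ Icc k r)
  have hcr : c < r := lt_of_le_of_ne hcA.2.2 (fun h => hfr (h ▸ hcA.1))
  refine ⟨c, hcA.1, hcA.2.1, hcr, fun x hx h0 => ?_⟩
  have hxA : x ∈ {x : ℝ | deriv f x = 0} ∩ Icc k r :=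
    ⟨h0, hcA.2.1.trans hx.1.le, hx.2.le⟩
  exact absurd (le_csSup hcomp.bddAbove hxA) (not_le.mpr hx.1)

private lemma crit_right {f : ℝ → ℝ} (hdc : Continuous (deriv f)) {k r : ℝ}
    (hk : deriv f k = 0) (hkr : r < k) (hfr : deriv f r ≠ 0) :
    ∃ c, deriv f c = 0 ∧ c ≤ k ∧ r < c ∧ ∀ x ∈ Ioo r c, deriv f x ≠ 0 := by
  have hclosed : IsClosed {x : ℝ | deriv f x = 0} := isClosed_eq hdc continuous_const
  have hcomp : IsCompact ({x : ℝ | deriv f x = 0} ∩ Icc r k) :=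
    isCompact_Icc.inter_left hclosed
  have hAne : ({x : ℝ | deriv f x = 0} ∩ Icc r k).Nonempty :=
    ⟨k, hk, hkr.le, le_refl k⟩
  have hcA : sInf ({x : ℝ | deriv f x = 0} ∩ Icc r k) ∈
      {x : ℝ | deriv f x = 0} ∩ Icc r k := hcomp.sInf_mem hAne
  set c := sInf ({x : ℝ | deriv f x = 0} ∩ Icc r k)
  have hcr : r < c := lt_of_le_of_ne hcA.2.1 (fun h => hfr (h.symm ▸ hcA.1))
  refine ⟨c, hcA.1, hcA.2.2, hcr, fun x hx h0 => ?_⟩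
  have hxA : x ∈ {x : ℝ | deriv f x = 0} ∩ Icc r k :=
    ⟨h0, hx.1.le, hx.2.le.trans hcA.2.2⟩
  exact absurd (csInf_le hcomp.bddBelow hxA) (not_le.mpr hx.2)

private lemma cover {f : ℝ → ℝ} (hcont : Continuous f) (hdc : Continuous (deriv f))
    {L R cl r cr : ℝ}
    (h1 : cl < r) (h2 : r < cr)
    (hne : ∀ x ∈ Ioo cl cr, deriv f x ≠ 0)
    (hblow : (Tendsto (modNewtonFun f) (𝓝[>] cl) atTop ∧
               Tendsto (modNewtonFun f) (𝓝[<] cr) atBot) ∨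
             (Tendsto (modNewtonFun f) (𝓝[>] cl) atBot ∧
               Tendsto (modNewtonFun f) (𝓝[<] cr) atTop)) :
    ∃ u v, cl < u ∧ u < v ∧ v < cr ∧
      (∀ x ∈ Icc u v, deriv f x ≠ 0) ∧
      ContinuousOn (modNewtonFun f) (Icc u v) ∧
      Icc L R ⊆ modNewtonFun f '' Icc u v := by
  have hmeml : ∀ᶠ x in 𝓝[>] cl, x ∈ Ioo cl r := by
    filter_upwards [Ioo_mem_nhdsGT_of_mem (⟨le_refl cl, h1⟩ : cl ∈ Ico cl r)] with x hx
    exact hx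
  have hmemr : ∀ᶠ x in 𝓝[<] cr, x ∈ Ioo r cr := by
    filter_upwards [Ioo_mem_nhdsLT_of_mem (⟨h2, le_refl cr⟩ : cr ∈ Ioc r cr)] with x hx
    exact hx
  obtain ⟨u, hu, v, hv, hmin, hmax⟩ :
      ∃ u, u ∈ Ioo cl r ∧ ∃ v, v ∈ Ioo r cr ∧
        modNewtonFun f u ⊓ modNewtonFun f v ≤ L ∧
        R ≤ modNewtonFun f u ⊔ modNewtonFun f v := by
    rcases hblow with ⟨hl, hr⟩ | ⟨hl, hr⟩
    · obtain ⟨u, hMu, hu⟩ := ((hl.eventually_ge_atTop R).and hmeml).exists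
      obtain ⟨v, hMv, hv⟩ := ((hr.eventually_le_atBot L).and hmemr).exists
      exact ⟨u, hu, v, hv, inf_le_of_right_le hMv, le_sup_of_le_left hMu⟩
    · obtain ⟨u, hMu, hu⟩ := ((hl.eventually_le_atBot L).and hmeml).exists
      obtain ⟨v, hMv, hv⟩ := ((hr.eventually_ge_atTop R).and hmemr).exists
      exact ⟨u, hu, v, hv, inf_le_of_left_le hMu, le_sup_of_le_right hMv⟩
  have huv : u < v := hu.2.trans hv.1
  have hsub : Icc u v ⊆ Ioo cl cr :=
    fun x hx => ⟨hu.1.trans_le hx.1, lt_of_le_of_lt hx.2 hv.2⟩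
  have hnz : ∀ x ∈ Icc u v, deriv f x ≠ 0 := fun x hx => hne x (hsub hx)
  have hNc : ContinuousOn (newtonFun f) (Icc u v) :=
    continuousOn_id.sub ((hcont.continuousOn).div (hdc.continuousOn) hnz)
  have hMc : ContinuousOn (modNewtonFun f) (Icc u v) :=
    hNc.sub ((hcont.comp_continuousOn hNc).div (hdc.continuousOn) hnz)
  have hIcc : uIcc u v = Icc u v := uIcc_of_le huv.le
  have him : uIcc (modNewtonFun f u) (modNewtonFun f v) ⊆
      modNewtonFun f '' uIcc u v :=
    intermediate_value_uIcc (by rw [hIcc]; exact hMc)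
  refine ⟨u, v, hu.1, huv, hv.2, hnz, hMc, ?_⟩
  rw [hIcc] at him
  refine subset_trans ?_ him
  rw [Set.uIcc]
  exact Icc_subset_Icc hmin hmax

end Auxiliary

/-- If `f` is a Newton-class function, has infinite limits of opposite signs
at `±∞`, and has at least four real roots, then there exist two disjoint
nondegenerate compact intervals `I₁`, `I₂` on which `f'` does not vanish,
`M_f` is continuous on each of them, and `M_f(I₁)` and `M_f(I₂)` both contain
`I₁ ∪ I₂`. -/
theorem modNewtonFun_exists_two_covering_intervals
    (f : ℝ → ℝ)
    (hf : NewtonClass f)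
    (hlim : (Filter.Tendsto f Filter.atTop Filter.atTop ∧
              Filter.Tendsto f Filter.atBot Filter.atBot) ∨
            (Filter.Tendsto f Filter.atTop Filter.atBot ∧
              Filter.Tendsto f Filter.atBot Filter.atTop))
    (hroots : ∃ r₁ r₂ r₃ r₄ : ℝ, r₁ < r₂ ∧ r₂ < r₃ ∧ r₃ < r₄ ∧
      f r₁ = 0 ∧ f r₂ = 0 ∧ f r₃ = 0 ∧ f r₄ = 0) :
    ∃ a₁ b₁ a₂ b₂ : ℝ, a₁ < b₁ ∧ a₂ < b₂ ∧
      Disjoint (Set.Icc a₁ b₁) (Set.Icc a₂ b₂) ∧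
      (∀ x ∈ Set.Icc a₁ b₁, deriv f x ≠ 0) ∧
      (∀ x ∈ Set.Icc a₂ b₂, deriv f x ≠ 0) ∧
      ContinuousOn (modNewtonFun f) (Set.Icc a₁ b₁) ∧
      ContinuousOn (modNewtonFun f) (Set.Icc a₂ b₂) ∧
      Set.Icc a₁ b₁ ∪ Set.Icc a₂ b₂ ⊆ modNewtonFun f '' Set.Icc a₁ b₁ ∧
      Set.Icc a₁ b₁ ∪ Set.Icc a₂ b₂ ⊆ modNewtonFun f '' Set.Icc a₂ b₂ := by
  obtain ⟨r₁, r₂, r₃, r₄, h12, h23, h34, hf1, hf2, hf3, hf4⟩ := hroots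
  obtain ⟨hC2, hsimple, -⟩ := hf
  have hcont : Continuous f := hC2.continuous
  have hdc : Continuous (deriv f) := hC2.continuous_deriv one_le_two
  -- critical points between consecutive roots, by Rolle
  obtain ⟨k₁, hk₁, hk₁0⟩ :=
    exists_deriv_eq_zero h12 hcont.continuousOn (hf1.trans hf2.symm)
  obtain ⟨k₂, hk₂, hk₂0⟩ :=
    exists_deriv_eq_zero h23 hcont.continuousOn (hf2.trans hf3.symm)
  obtain ⟨k₃, hk₃, hk₃0⟩ :=
    exists_deriv_eq_zero h34 hcont.continuousOn (hf3.trans hf4.symm)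
  -- neighboring critical points around r₂ and r₃
  obtain ⟨c₁, hc₁0, -, hc₁r, hne₁l⟩ :=
    crit_left hdc hk₁0 hk₁.2 (hsimple r₂ hf2)
  obtain ⟨c₂, hc₂0, hc₂k, hrc₂, hne₁r⟩ :=
    crit_right hdc hk₂0 hk₂.1 (hsimple r₂ hf2)
  obtain ⟨c₂', hc₂'0, hkc₂', hc₂'r, hne₂l⟩ :=
    crit_left hdc hk₂0 hk₂.2 (hsimple r₃ hf3)
  obtain ⟨c₃, hc₃0, -, hrc₃, hne₂r⟩ :=
    crit_right hdc hk₃0 hk₃.1 (hsimple r₃ hf3)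
  have hc₂c₂' : c₂ ≤ c₂' := hc₂k.trans hkc₂'
  -- f' does not vanish between the neighboring critical points
  have hne₁ : ∀ x ∈ Set.Ioo c₁ c₂, deriv f x ≠ 0 := by
    intro x hx
    rcases lt_trichotomy x r₂ with h | h | h
    · exact hne₁l x ⟨hx.1, h⟩
    · rw [h]; exact hsimple r₂ hf2
    · exact hne₁r x ⟨h, hx.2⟩
  have hne₂ : ∀ x ∈ Set.Ioo c₂' c₃, deriv f x ≠ 0 := by
    intro x hx
    rcases lt_trichotomy x r₃ with h | h | h
    · exact hne₂l x ⟨hx.1, h⟩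
    · rw [h]; exact hsimple r₃ hf3
    · exact hne₂r x ⟨h, hx.2⟩
  -- blow-up of the modified Newton map at the critical endpoints
  have hblow₁ := interval_blowup hcont hdc hc₁r hrc₂ hf2 hc₁0 hc₂0 hne₁ hlim
  have hblow₂ := interval_blowup hcont hdc hc₂'r hrc₃ hf3 hc₂'0 hc₃0 hne₂ hlim
  -- covering intervals inside (c₁, c₂) and (c₂', c₃), both covering [c₁, c₃]
  obtain ⟨u, v, hc₁u, huv, hvc₂, hnz₁, hMc₁, him₁⟩ :=
    cover (L := c₁) (R := c₃) hcont hdc hc₁r hrc₂ hne₁ hblow₁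
  obtain ⟨u', v', hc₂'u, huv', hvc₃, hnz₂, hMc₂, him₂⟩ :=
    cover (L := c₁) (R := c₃) hcont hdc hc₂'r hrc₃ hne₂ hblow₂
  have hvu' : v < u' := lt_of_lt_of_le hvc₂ (hc₂c₂'.trans hc₂'u.le)
  have hsubs : Set.Icc u v ∪ Set.Icc u' v' ⊆ Set.Icc c₁ c₃ := by
    apply Set.union_subset
    · exact Set.Icc_subset_Icc hc₁u.le
        (hvc₂.le.trans (hc₂c₂'.trans (hc₂'r.le.trans hrc₃.le)))
    · exact Set.Icc_subset_Icc
        ((hc₁r.le.trans (hrc₂.le.trans (hc₂c₂'.trans hc₂'u.le)))) hvc₃.le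
  refine ⟨u, v, u', v', huv, huv', ?_, hnz₁, hnz₂, hMc₁, hMc₂,
    hsubs.trans him₁, hsubs.trans him₂⟩
  rw [Set.disjoint_left]
  intro x hx hx'
  exact absurd (hx.2.trans_lt (hvu'.trans_le hx'.1)) (lt_irrefl x)
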